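/- Fix λ ∈ (0,1] and C > 0. Suppose m, n : (0,1] → ℝ satisfy m(h)/h → 0 and n(h)/h → 0 as h → 0+. Then for every ε > 0 there exists δ > 0 such that for every sequence (h_j) with 0 < h_j ≤ δ for all j and ∑_j h_j = ∞, and every choice of signs k_i(h_j) ∈ {m(h_j), n(h_j)}, one has | ∑_{i=1}^∞ (∏_{j=1}^{i-1} (1 − λ h_j + k_i(h_j))) h_i − 1/λ | ≤ ε, provided δ is small enough that 0 < λ ± sup_j |m(h_j)|/h_j, |n(h_j)|/h_j < 1. -/
import Mathlib


open Filter

private lemma telescope_sum (h : ℕ → ℝ) (μ : ℝ) (hμ : μ ≠ 0) (N : ℕ) :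
    ∑ i ∈ Finset.range N, (∏ j ∈ Finset.range i, (1 - μ * h j)) * h i
      = (1 - ∏ j ∈ Finset.range N, (1 - μ * h j)) / μ := by
  induction N with
  | zero => simp
  | succ N ih =>
      rw [Finset.sum_range_succ, Finset.prod_range_succ, ih]
      field_simp
      ring

private lemma geom_hasSum (h : ℕ → ℝ) (hpos : ∀ j, 0 < h j) (μ : ℝ) (hμ0 : 0 < μ)
    (hfac : ∀ j, 0 ≤ 1 - μ * h j)
    (hdiv : Tendsto (fun N => ∑ j ∈ Finset.range N, h j) atTop atTop) :
    HasSum (fun i => (∏ j ∈ Finset.range i, (1 - μ * h j)) * h i) (1 / μ) := by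
  have hprod0 : Tendsto (fun N => ∏ j ∈ Finset.range N, (1 - μ * h j)) atTop (nhds 0) := by
    have hub : ∀ N, ∏ j ∈ Finset.range N, (1 - μ * h j)
        ≤ Real.exp (-(μ * ∑ j ∈ Finset.range N, h j)) := by
      intro N
      have : ∏ j ∈ Finset.range N, (1 - μ * h j)
          ≤ ∏ j ∈ Finset.range N, Real.exp (-(μ * h j)) := by
        apply Finset.prod_le_prod
        · intro j _; exact hfac j
        · intro j _
          have := Real.add_one_le_exp (-(μ * h j))
          linarith
      calc ∏ j ∈ Finset.range N, (1 - μ * h j)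
          ≤ ∏ j ∈ Finset.range N, Real.exp (-(μ * h j)) := this
        _ = Real.exp (-(μ * ∑ j ∈ Finset.range N, h j)) := by
            rw [← Real.exp_sum]; congr 1; rw [Finset.mul_sum]; simp
    have hlb : ∀ N, (0:ℝ) ≤ ∏ j ∈ Finset.range N, (1 - μ * h j) := fun N =>
      Finset.prod_nonneg (fun j _ => hfac j)
    have hexp : Tendsto (fun N => Real.exp (-(μ * ∑ j ∈ Finset.range N, h j))) atTop (nhds 0) := by
      apply Real.tendsto_exp_atBot.comp
      apply tendsto_neg_atBot_iff.mpr
      exact (hdiv.const_mul_atTop hμ0)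
    exact tendsto_of_tendsto_of_tendsto_of_le_of_le tendsto_const_nhds hexp hlb hub
  have hpartial : Tendsto (fun N => ∑ i ∈ Finset.range N,
      (∏ j ∈ Finset.range i, (1 - μ * h j)) * h i) atTop (nhds (1 / μ)) := by
    have : Tendsto (fun N => (1 - ∏ j ∈ Finset.range N, (1 - μ * h j)) / μ) atTop
        (nhds ((1 - 0) / μ)) := ((tendsto_const_nhds.sub hprod0).div_const μ)
    simpa [telescope_sum h μ (ne_of_gt hμ0)] using this
  have hnn : ∀ i, 0 ≤ (∏ j ∈ Finset.range i, (1 - μ * h j)) * h i := fun i =>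
    mul_nonneg (Finset.prod_nonneg (fun j _ => hfac j)) (hpos i).le
  have hsumm : Summable (fun i => (∏ j ∈ Finset.range i, (1 - μ * h j)) * h i) := by
    apply summable_of_sum_range_le hnn (c := 1 / μ)
    intro N
    rw [telescope_sum h μ (ne_of_gt hμ0)]
    have hP : (0:ℝ) ≤ ∏ j ∈ Finset.range N, (1 - μ * h j) :=
      Finset.prod_nonneg (fun j _ => hfac j)
    gcongr
    linarith
  exact (hsumm.hasSum_iff_tendsto_nat).mpr hpartial

/-- perturbed discounted sums converge to `1/λ` uniformly over
fine partitions, for perturbations `k_i(h_j) ∈ {m(h_j), n(h_j)}` with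
`m(h)/h → 0` and `n(h)/h → 0`. -/
theorem perturbed_discount_sum (l : ℝ) (hl : l ∈ Set.Ioc (0:ℝ) 1) (C : ℝ) (hC : 0 < C)
    (m n : ℝ → ℝ)
    (hm : Tendsto (fun h => m h / h) (nhdsWithin 0 (Set.Ioi 0)) (nhds 0))
    (hn : Tendsto (fun h => n h / h) (nhdsWithin 0 (Set.Ioi 0)) (nhds 0)) :
    ∀ ε > (0:ℝ), ∃ δ > (0:ℝ),
      ∀ h : ℕ → ℝ, (∀ j, 0 < h j ∧ h j ≤ δ) →
        Tendsto (fun N => ∑ j ∈ Finset.range N, h j) atTop atTop →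
        (∀ j, 0 < l - |m (h j)| / h j ∧ l + |m (h j)| / h j < 1 ∧
              0 < l - |n (h j)| / h j ∧ l + |n (h j)| / h j < 1) →
        ∀ k : ℕ → ℕ → ℝ, (∀ i j, k i j = m (h j) ∨ k i j = n (h j)) →
        |∑' i : ℕ, (∏ j ∈ Finset.range i, (1 - l * h j + k i j)) * h i - 1 / l| ≤ ε := by
  obtain ⟨hl0, hl1⟩ := hl
  intro ε hε
  set η : ℝ := min (l / 2) (ε * l ^ 2 / 2) with hηdef
  have hη0 : 0 < η := lt_min (by linarith) (by positivity)
  have hηl : η ≤ l / 2 := min_le_left _ _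
  have hηε : η ≤ ε * l ^ 2 / 2 := min_le_right _ _
  have hηhalf : η ≤ 1 / 2 := hηl.trans (by linarith)
  -- get δm, δn from the limits
  rw [Metric.tendsto_nhdsWithin_nhds] at hm hn
  obtain ⟨δm, hδm0, hδm⟩ := hm η hη0
  obtain ⟨δn, hδn0, hδn⟩ := hn η hη0
  refine ⟨min (1/2) (min (δm/2) (δn/2)), by positivity, ?_⟩
  intro h hh hdiv _hgap k hk
  -- bounds on each h j
  have hhpos : ∀ j, 0 < h j := fun j => (hh j).1
  have hhhalf : ∀ j, h j ≤ 1/2 := fun j => (hh j).2.trans (min_le_left _ _)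
  have hkb : ∀ i j, |k i j| ≤ η * h j := by
    intro i j
    have hb : ∀ (f : ℝ → ℝ) (δf : ℝ), 0 < δf →
        (∀ x ∈ Set.Ioi (0:ℝ), dist x 0 < δf → dist (f x / x) 0 < η) →
        h j ≤ δf / 2 → |f (h j)| ≤ η * h j := by
      intro f δf hδf0 hδf hle
      have hx : dist (h j) 0 < δf := by
        rw [Real.dist_eq, sub_zero, abs_of_pos (hhpos j)]; linarith
      have := hδf (h j) (hhpos j) hx
      rw [Real.dist_eq, sub_zero, abs_div, abs_of_pos (hhpos j)] at this
      have := (div_lt_iff₀ (hhpos j)).mp this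
      linarith
    rcases hk i j with hkm | hkm <;> rw [hkm]
    · exact hb m δm hδm0 hδm ((hh j).2.trans ((min_le_right _ _).trans (min_le_left _ _)))
    · exact hb n δn hδn0 hδn ((hh j).2.trans ((min_le_right _ _).trans (min_le_right _ _)))
  set μ₁ : ℝ := l - η with hμ₁
  set μ₂ : ℝ := l + η with hμ₂
  clear_value η μ₁ μ₂
  have hμ₁0 : 0 < μ₁ := by have := hηl; simp only [hμ₁]; linarith
  have hμ₂0 : 0 < μ₂ := by rw [hμ₂]; positivity
  have hfac₂ : ∀ j, 0 ≤ 1 - μ₂ * h j := by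
    intro j
    have h1 : μ₂ ≤ 3/2 := by simp only [hμ₂]; linarith [hηhalf]
    have h2 : μ₂ * h j ≤ (3/2) * (1/2) :=
      mul_le_mul h1 (hhhalf j) (hhpos j).le (by norm_num)
    norm_num at h2
    linarith
  have hfac₁ : ∀ j, 0 ≤ 1 - μ₁ * h j := by
    intro j
    have : μ₁ * h j ≤ μ₂ * h j := by
      apply mul_le_mul_of_nonneg_right _ (hhpos j).le
      simp only [hμ₁, hμ₂]; linarith
    linarith [hfac₂ j]
  -- termwise sandwich
  have hlow : ∀ i j, 1 - μ₂ * h j ≤ 1 - l * h j + k i j := by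
    intro i j
    have := hkb i j
    have := abs_le.mp this
    simp only [hμ₂]; nlinarith
  have hhigh : ∀ i j, 1 - l * h j + k i j ≤ 1 - μ₁ * h j := by
    intro i j
    have := abs_le.mp (hkb i j)
    simp only [hμ₁]; nlinarith
  have hfacmid : ∀ i j, 0 ≤ 1 - l * h j + k i j := fun i j =>
    (hfac₂ j).trans (hlow i j)
  have hS₁ := geom_hasSum h hhpos μ₁ hμ₁0 hfac₁ hdiv
  have hS₂ := geom_hasSum h hhpos μ₂ hμ₂0 hfac₂ hdiv
  -- product sandwich for each i
  have hprodle : ∀ i, (∏ j ∈ Finset.range i, (1 - l * h j + k i j)) * h i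
      ≤ (∏ j ∈ Finset.range i, (1 - μ₁ * h j)) * h i := by
    intro i
    apply mul_le_mul_of_nonneg_right _ (hhpos i).le
    exact Finset.prod_le_prod (fun j _ => hfacmid i j) (fun j _ => hhigh i j)
  have hprodge : ∀ i, (∏ j ∈ Finset.range i, (1 - μ₂ * h j)) * h i
      ≤ (∏ j ∈ Finset.range i, (1 - l * h j + k i j)) * h i := by
    intro i
    apply mul_le_mul_of_nonneg_right _ (hhpos i).le
    exact Finset.prod_le_prod (fun j _ => hfac₂ j) (fun j _ => hlow i j)
  have hnnmid : ∀ i, 0 ≤ (∏ j ∈ Finset.range i, (1 - l * h j + k i j)) * h i := fun i =>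
    mul_nonneg (Finset.prod_nonneg (fun j _ => hfacmid i j)) (hhpos i).le
  have hsummid : Summable (fun i => (∏ j ∈ Finset.range i, (1 - l * h j + k i j)) * h i) :=
    Summable.of_nonneg_of_le hnnmid hprodle hS₁.summable
  have hub : (∑' i : ℕ, (∏ j ∈ Finset.range i, (1 - l * h j + k i j)) * h i) ≤ 1 / μ₁ := by
    rw [← hS₁.tsum_eq]
    exact Summable.tsum_le_tsum hprodle hsummid hS₁.summable
  have hlb : 1 / μ₂ ≤ ∑' i : ℕ, (∏ j ∈ Finset.range i, (1 - l * h j + k i j)) * h i := by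
    rw [← hS₂.tsum_eq]
    exact Summable.tsum_le_tsum hprodge hS₂.summable hsummid
  -- numeric bounds
  have hb1 : 1 / μ₁ ≤ 1 / l + ε := by
    rw [div_add' _ _ _ (ne_of_gt hl0), div_le_div_iff₀ hμ₁0 hl0]
    have hμ₁l2 : l / 2 ≤ μ₁ := by simp only [hμ₁]; linarith
    nlinarith
  have hb2 : 1 / l - 1 / μ₂ ≤ ε := by
    rw [div_sub_div _ _ (ne_of_gt hl0) (ne_of_gt hμ₂0), div_le_iff₀ (by positivity)]
    simp only [hμ₂]
    nlinarith
  rw [abs_le]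
  constructor <;> linarith
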